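/- Let R be a commutative Bezout ring of stable range 2 and let a ∈ R be a regular inpseudo-irreducible element. Then a is an element of almost stable range 1, i.e. the quotient ring R/aR has stable range 1. -/

import Mathlib

/-- A regular element: a nonzero element that is not a zero divisor. -/
def IsRegularElem {R : Type*} [CommRing R] (a : R) : Prop :=
  a ≠ 0 ∧ ∀ x : R, a * x = 0 → x = 0

/-- Stable range 2. -/
def HasStableRange2 (R : Type*) [CommRing R] : Prop :=
  ∀ a b c : R, Ideal.span {a, b, c} = ⊤ →
    ∃ x y : R, Ideal.span {a + c * x, b + c * y} = ⊤

/-- Stable range 1. -/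
def HasStableRange1 (S : Type*) [CommRing S] : Prop :=
  ∀ a b : S, Ideal.span {a, b} = ⊤ → ∃ y : S, IsUnit (a + b * y)

/-- Inpseudo-irreducible element: any factorization is comaximal. -/
def IsInpseudoIrreducible {R : Type*} [CommRing R] (a : R) : Prop :=
  ∀ b c : R, a = b * c → Ideal.span {b, c} = ⊤

/-- Pseudo-irreducible element. -/
def IsPseudoIrreducible {R : Type*} [CommRing R] (a : R) : Prop :=
  ∀ b c : R, a = b * c → ¬IsUnit b → ¬IsUnit c → Ideal.span {b, c} ≠ ⊤

/-- Adequate element of a Bezout ring. -/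
def IsAdequateElem {R : Type*} [CommRing R] (a : R) : Prop :=
  ∀ b : R, ∃ r s : R, a = r * s ∧ Ideal.span {r, b} = ⊤ ∧
    ∀ s' : R, ¬IsUnit s' → s' ∣ s → Ideal.span {s', b} ≠ ⊤

/-- Avoidable element. -/
def IsAvoidableElem {R : Type*} [CommRing R] (a : R) : Prop :=
  ∀ b c : R, Ideal.span {a, b, c} = ⊤ →
    ∃ r s : R, a = r * s ∧ Ideal.span {r, b} = ⊤ ∧ Ideal.span {s, c} = ⊤ ∧
      Ideal.span {r, s} = ⊤

/-- Gelfand element. -/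
def IsGelfandElem {R : Type*} [CommRing R] (a : R) : Prop :=
  ∀ b c : R, Ideal.span {a, b, c} = ⊤ →
    ∃ r s : R, a = r * s ∧ Ideal.span {r, b} = ⊤ ∧ Ideal.span {s, c} = ⊤

/-- Semipotent element. -/
def IsSemipotentElem {R : Type*} [CommRing R] (a : R) : Prop :=
  ∀ b : R,
    Ideal.Quotient.mk (Ideal.span {a}) b ∉
      Ideal.jacobson (⊥ : Ideal (R ⧸ Ideal.span ({a} : Set R))) →
    ∃ r s : R, ¬IsUnit r ∧ ¬IsUnit s ∧ a = r * s ∧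
      Ideal.span {r, b} = ⊤ ∧ Ideal.span {r, s} = ⊤

/-- Gelfand ring. -/
def IsGelfandRing (S : Type*) [CommRing S] : Prop :=
  ∀ a b : S, a + b = 1 → ∃ r s : S, (1 + a * r) * (1 + b * s) = 0

/-- Clean ring: every element is a unit plus an idempotent. -/
def IsCleanRing (S : Type*) [CommRing S] : Prop :=
  ∀ a : S, ∃ u e : S, IsUnit u ∧ IsIdempotentElem e ∧ a = u + e

/-- Von Neumann regular ring. -/
def IsVNRegularRing (S : Type*) [CommRing S] : Prop :=
  ∀ a : S, ∃ x : S, a = a * x * a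

/-- Semiregular ring: S/J(S) is von Neumann regular and idempotents lift modulo J(S). -/
def IsSemiregularRing (S : Type*) [CommRing S] : Prop :=
  IsVNRegularRing (S ⧸ Ideal.jacobson (⊥ : Ideal S)) ∧
  ∀ x : S, IsIdempotentElem (Ideal.Quotient.mk (Ideal.jacobson (⊥ : Ideal S)) x) →
    ∃ e : S, IsIdempotentElem e ∧
      Ideal.Quotient.mk (Ideal.jacobson (⊥ : Ideal S)) e =
        Ideal.Quotient.mk (Ideal.jacobson (⊥ : Ideal S)) x

/-- Semipotent ring: every principal ideal not contained in the Jacobson radical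
contains a nonzero idempotent. -/
def IsSemipotentRing (S : Type*) [CommRing S] : Prop :=
  ∀ b : S, ¬(Ideal.span {b} ≤ Ideal.jacobson (⊥ : Ideal S)) →
    ∃ e : S, e ≠ 0 ∧ IsIdempotentElem e ∧ e ∈ Ideal.span ({b} : Set S)

/-- Indecomposable ring: the only idempotents are 0 and 1. -/
def IsIndecomposableRing (S : Type*) [CommRing S] : Prop :=
  ∀ e : S, IsIdempotentElem e → e = 0 ∨ e = 1

/-- Semihereditary ring: every finitely generated ideal is projective. -/
def IsSemihereditaryRing (R : Type*) [CommRing R] : Prop :=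
  ∀ I : Ideal R, I.FG → Module.Projective R I

/-- Regular range 1. -/
def HasRegularRange1 (R : Type*) [CommRing R] : Prop :=
  ∀ a b : R, Ideal.span {a, b} = ⊤ → ∃ t : R, IsRegularElem (a + b * t)

/-- Gelfand range 1. -/
def HasGelfandRange1 (R : Type*) [CommRing R] : Prop :=
  ∀ a b : R, Ideal.span {a, b} = ⊤ → ∃ t : R, IsGelfandElem (a + b * t)

/-- A rectangular matrix admits diagonal reduction with successive divisibility
of the diagonal entries. -/
def AdmitsDiagReduction {R : Type*} [CommRing R] {n m : ℕ}
    (A : Matrix (Fin n) (Fin m) R) : Prop :=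
  ∃ (P : Matrix (Fin n) (Fin n) R) (Q : Matrix (Fin m) (Fin m) R),
    IsUnit P ∧ IsUnit Q ∧
    (∀ (i : Fin n) (j : Fin m), (i : ℕ) ≠ (j : ℕ) → (P * A * Q) i j = 0) ∧
    (∀ (k : ℕ) (hn : k + 1 < n) (hm : k + 1 < m),
      (P * A * Q) ⟨k, Nat.lt_of_succ_lt hn⟩ ⟨k, Nat.lt_of_succ_lt hm⟩ ∣
        (P * A * Q) ⟨k + 1, hn⟩ ⟨k + 1, hm⟩)

/-- Elementary divisor ring: every matrix admits diagonal reduction. -/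
def IsElementaryDivisorRing (R : Type*) [CommRing R] : Prop :=
  ∀ (n m : ℕ) (A : Matrix (Fin n) (Fin m) R), AdmitsDiagReduction A


theorem stmt7 {R : Type*} [CommRing R] [IsBezout R] (hR : HasStableRange2 R)
    (a : R) (hreg : IsRegularElem a) (hin : IsInpseudoIrreducible a) :
    HasStableRange1 (R ⧸ Ideal.span ({a} : Set R)) := by
  intro A B hAB
  obtain ⟨b, rfl⟩ := Ideal.Quotient.mk_surjective A
  obtain ⟨c, rfl⟩ := Ideal.Quotient.mk_surjective B
  have hmka : Ideal.Quotient.mk (Ideal.span ({a} : Set R)) a = 0 := by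
    rw [Ideal.Quotient.eq_zero_iff_mem]
    exact Ideal.subset_span rfl
  -- step 1: span {b, c, a} = ⊤ in R
  have h1 : Ideal.span ({b, c, a} : Set R) = ⊤ := by
    rw [Ideal.eq_top_iff_one]
    rw [Ideal.eq_top_iff_one] at hAB
    obtain ⟨P, Q, hPQ⟩ := Ideal.mem_span_pair.mp hAB
    obtain ⟨p, rfl⟩ := Ideal.Quotient.mk_surjective P
    obtain ⟨q, rfl⟩ := Ideal.Quotient.mk_surjective Q
    have hm1 : (Ideal.Quotient.mk (Ideal.span ({a} : Set R))) (p * b + q * c) = 1 := by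
      push_cast [map_add, map_mul] at hPQ ⊢
      exact hPQ
    have h2 : 1 - (p * b + q * c) ∈ Ideal.span ({a} : Set R) := by
      rw [← Ideal.Quotient.eq_zero_iff_mem, map_sub, hm1, map_one, sub_self]
    obtain ⟨r, hr⟩ := Ideal.mem_span_singleton'.mp h2
    have h3 : 1 = p * b + q * c + r * a := by linear_combination -hr
    rw [h3]
    have hb : b ∈ Ideal.span ({b, c, a} : Set R) := Ideal.subset_span (by simp)
    have hc : c ∈ Ideal.span ({b, c, a} : Set R) := Ideal.subset_span (by simp)
    have ha : a ∈ Ideal.span ({b, c, a} : Set R) := Ideal.subset_span (by simp)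
    exact Ideal.add_mem _ (Ideal.add_mem _ (Ideal.mul_mem_left _ _ hb)
      (Ideal.mul_mem_left _ _ hc)) (Ideal.mul_mem_left _ _ ha)
  -- step 2: stable range 2
  obtain ⟨x, y, h2⟩ := hR b c a h1
  set b' := b + a * x with hb'
  set c' := c + a * y with hc'
  obtain ⟨p, q, hpq⟩ := Ideal.mem_span_pair.mp (Ideal.eq_top_iff_one _ |>.mp h2)
  -- step 3: Bezout gcd of a and b'
  obtain ⟨d, ⟨a₁, ha₁⟩, ⟨b₁, hb₁⟩, u, v, huv'⟩ :
      ∃ d : R, (∃ a₁, a = d * a₁) ∧ (∃ b₁, b' = d * b₁) ∧ ∃ u v, u * a + v * b' = d :=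
    ⟨IsBezout.gcd a b', IsBezout.gcd_dvd_left a b', IsBezout.gcd_dvd_right a b',
      IsBezout.gcd_eq_sum a b'⟩
  -- step 4: regularity gives u * a₁ + v * b₁ = 1
  have hcancel : d * (1 - (u * a₁ + v * b₁)) = 0 := by
    linear_combination -huv' + u * ha₁ + v * hb₁
  have huv : u * a₁ + v * b₁ = 1 := by
    have h0 : a * (1 - (u * a₁ + v * b₁)) = 0 := by
      linear_combination a₁ * hcancel + (1 - (u * a₁ + v * b₁)) * ha₁
    have hz := hreg.2 _ h0
    linear_combination -hz
  -- step 5: inpseudo-irreducibility: span {d, a₁} = ⊤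
  obtain ⟨e, f, hef⟩ := Ideal.mem_span_pair.mp
    (Ideal.eq_top_iff_one _ |>.mp (hin d a₁ ha₁))
  -- key element
  set g := b' + c' * (f * a₁) with hg
  set h := p * b₁ - q * b₁ + q * c' * e with hh
  set k := u + f * v * b₁ - e * v * c' * f with hk
  have hX : q * g + d * h = 1 := by
    simp only [hg, hh]
    linear_combination hpq + q * c' * hef + (q - p) * hb₁
  have hY : e * v * g + a₁ * k = 1 := by
    simp only [hg, hk]
    linear_combination huv + e * v * hb₁ + v * b₁ * hef
  set s := q * e * v * g + q * a₁ * k + d * h * e * v with hs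
  have hfinal : g * s + a * (h * k) = 1 := by
    have hXY : (q * g + d * h) * (e * v * g + a₁ * k) = 1 := by rw [hX, hY]; ring
    linear_combination hXY + h * k * ha₁
  -- conclude in the quotient
  refine ⟨Ideal.Quotient.mk _ (f * a₁), ?_⟩
  have hmk : Ideal.Quotient.mk (Ideal.span ({a} : Set R)) b +
      Ideal.Quotient.mk (Ideal.span ({a} : Set R)) c * Ideal.Quotient.mk _ (f * a₁) =
      Ideal.Quotient.mk _ g := by
    rw [hg, hb', hc']
    push_cast [map_add, map_mul, hmka]
    ring
  rw [hmk]
  have hone : (Ideal.Quotient.mk (Ideal.span ({a} : Set R))) (g * s) = 1 := by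
    rw [show (1 : R ⧸ Ideal.span ({a} : Set R)) = Ideal.Quotient.mk _ (1 : R) from
      (map_one _).symm]
    exact Ideal.Quotient.eq.mpr (Ideal.mem_span_singleton'.mpr
      ⟨-(h * k), by linear_combination -hfinal⟩)
  exact IsUnit.of_mul_eq_one (Ideal.Quotient.mk _ s) (by rw [← map_mul]; exact hone)
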